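/- Let K be an infinite field and V a vector space over K, and let κ be a cardinal with #K < κ ≤ Module.rank K V. Suppose 𝓕 ⊆ V is star-like (a • f ∈ 𝓕 for every a ∈ K \ {0} and f ∈ 𝓕) and for every subset F ⊆ V with #F < κ there exists φ ∈ V with φ + F ⊆ 𝓕. Then every K-linear subspace Y of V with Y ⊆ 𝓕 ∪ {0} and dim Y < κ is contained in a K-linear subspace X of V with X ⊆ 𝓕 ∪ {0} and dim X = κ. -/

import Mathlib

open Cardinal

section Aux

variable {K V : Type u} [Field K] [Infinite K] [AddCommGroup V] [Module K V]

/-- Cardinality bound for a submodule of small rank. -/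
lemma aux_mk_lt_of_rank_lt {κ : Cardinal.{u}} (hK : #K < κ)
    (Z : Submodule K V) (hZ : Module.rank K Z < κ) : #Z < κ := by
  have hκ : ℵ₀ ≤ κ := (Cardinal.infinite_iff.mp ‹Infinite K›).trans hK.le
  set ι := Module.Free.ChooseBasisIndex K ↥Z
  have b : Module.Basis ι K ↥Z := Module.Free.chooseBasis K ↥Z
  have hZe : #↥Z = #(ι →₀ K) := Cardinal.mk_congr b.repr.toEquiv
  have hι : #ι = Module.rank K Z := b.mk_eq_rank''
  cases finite_or_infinite ι with
  | inl hfin =>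
    have : #(ι →₀ K) = #(ι → K) := Cardinal.mk_congr (Finsupp.equivFunOnFinite)
    rw [hZe, this]
    have harrow : #(ι → K) = #K ^ #ι := (Cardinal.power_def K ι).symm
    obtain ⟨n, hn⟩ := Cardinal.lt_aleph0.mp (Cardinal.lt_aleph0_of_finite ι)
    rw [harrow, hn]
    exact lt_of_le_of_lt (Cardinal.power_nat_le (Cardinal.aleph0_le_mk K)) hK
  | inr hinf =>
    rw [hZe, Cardinal.mk_finsupp_of_infinite]
    exact max_lt (hι ▸ hZ) hK

/-- The successor step: any small subspace inside `𝓕 ∪ {0}` can be enlarged by one vector. -/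
lemma aux_step {κ : Cardinal.{u}} (hK : #K < κ) (hV : κ ≤ Module.rank K V)
    (𝓕 : Set V)
    (hstar : ∀ a : K, a ≠ 0 → ∀ f ∈ 𝓕, a • f ∈ 𝓕)
    (hadd : ∀ F : Set V, #F < κ → ∃ φ : V, (fun f => φ + f) '' F ⊆ 𝓕)
    (Z : Submodule K V) (hZF : (Z : Set V) ⊆ 𝓕 ∪ {0}) (hZr : Module.rank K Z < κ) :
    ∃ w : V, w ∉ Z ∧ ((Z ⊔ Submodule.span K {w} : Submodule K V) : Set V) ⊆ 𝓕 ∪ {0} ∧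
      Module.rank K ↥(Z ⊔ Submodule.span K {w}) < κ := by
  have hκ : ℵ₀ ≤ κ := (Cardinal.infinite_iff.mp ‹Infinite K›).trans hK.le
  -- find a vector outside Z
  have hZne : Z ≠ ⊤ := by
    intro h
    rw [h] at hZr
    exact absurd (hV.trans_lt (by rwa [rank_top] at hZr)) (lt_irrefl _)
  obtain ⟨v, hv⟩ : ∃ v : V, v ∉ Z := by
    by_contra h
    push_neg at h
    exact hZne (Submodule.eq_top_iff'.mpr h)
  -- apply additivity to Z ∪ (v + Z)
  set F : Set V := (Z : Set V) ∪ (fun z => v + z) '' (Z : Set V) with hF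
  have hmkZ : #(Z : Set V) < κ := by
    have := aux_mk_lt_of_rank_lt hK Z hZr
    simpa using this
  have hFκ : #F < κ := by
    refine lt_of_le_of_lt (Cardinal.mk_union_le _ _) ?_
    exact Cardinal.add_lt_of_lt hκ hmkZ (lt_of_le_of_lt (Cardinal.mk_image_le) hmkZ)
  obtain ⟨φ, hφ⟩ := hadd F hFκ
  -- choose w ∉ Z with w + Z ⊆ 𝓕
  have key : ∃ w : V, w ∉ Z ∧ ∀ z ∈ Z, w + z ∈ 𝓕 := by
    by_cases hφZ : φ ∈ Z
    · refine ⟨φ + v, ?_, ?_⟩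
      · intro h
        exact hv (by simpa using Z.sub_mem h hφZ)
      · intro z hz
        have : v + z ∈ F := Or.inr ⟨z, hz, rfl⟩
        have := hφ ⟨v + z, this, rfl⟩
        simpa [add_assoc] using this
    · refine ⟨φ, hφZ, fun z hz => ?_⟩
      exact hφ ⟨z, Or.inl hz, rfl⟩
  obtain ⟨w, hwZ, hw𝓕⟩ := key
  refine ⟨w, hwZ, ?_, ?_⟩
  · -- the enlarged subspace sits in 𝓕 ∪ {0}
    intro x hx
    rw [SetLike.mem_coe, Submodule.mem_sup] at hx
    obtain ⟨z, hz, y, hy, rfl⟩ := hx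
    rw [Submodule.mem_span_singleton] at hy
    obtain ⟨a, rfl⟩ := hy
    by_cases ha : a = 0
    · subst ha
      simpa using hZF hz
    · left
      have h1 : w + a⁻¹ • z ∈ 𝓕 := hw𝓕 _ (Z.smul_mem _ hz)
      have h2 : a • (w + a⁻¹ • z) ∈ 𝓕 := hstar a ha _ h1
      have h3 : a • (w + a⁻¹ • z) = z + a • w := by
        rw [smul_add, smul_smul, mul_inv_cancel₀ ha, one_smul]
        exact add_comm _ _
      rwa [h3] at h2
  · -- rank estimate
    refine lt_of_le_of_lt (Submodule.rank_add_le_rank_add_rank Z (Submodule.span K {w})) ?_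
    have h1 : Module.rank K ↥(Submodule.span K ({w} : Set V)) ≤ 1 := by
      simpa using rank_span_le (R := K) ({w} : Set V)
    exact Cardinal.add_lt_of_lt hκ hZr (h1.trans_lt (Cardinal.one_lt_aleph0.trans_le hκ))

/-- Shrinking: between a small subspace and a large one there is one of exact rank `κ`. -/
lemma aux_shrink {κ : Cardinal.{u}} (hκ : ℵ₀ ≤ κ) (Y U : Submodule K V)
    (hYU : Y ≤ U) (hY : Module.rank K Y < κ) (hU : κ ≤ Module.rank K U) :
    ∃ X : Submodule K V, Y ≤ X ∧ X ≤ U ∧ Module.rank K X = κ := by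
  classical
  set Y' : Submodule K ↥U := Y.comap U.subtype with hY'
  have hY'rank : Module.rank K Y' = Module.rank K Y :=
    (Submodule.comapSubtypeEquivOfLe hYU).rank_eq
  obtain ⟨s, hsY', hsspan, hsli⟩ := exists_linearIndependent K (Y' : Set ↥U)
  have hsspan' : Submodule.span K s = Y' := by rw [hsspan, Submodule.span_eq]
  have hmks : #s = Module.rank K Y' := by
    rw [← rank_span_set hsli, hsspan']
  set t : Set ↥U := LinearIndepOn.extend (v := id) hsli (Set.subset_univ s) with ht
  have hst : s ⊆ t := LinearIndepOn.subset_extend (v := id) hsli _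
  have htli : LinearIndependent K ((↑) : t → ↥U) := LinearIndepOn.linearIndepOn_extend (v := id) hsli _
  have htspan : Submodule.span K t = ⊤ := by
    have := LinearIndepOn.subset_span_extend hsli (Set.subset_univ s)
    exact Submodule.eq_top_iff'.mpr fun x => this (Set.mem_univ x) 
  have hmkt : #t = Module.rank K U := by
    rw [← rank_span_set htli, htspan, rank_top]
  -- choose a subset of t \ s of cardinality κ
  have hdiff : κ ≤ #(t \ s : Set ↥U) := by
    by_contra hlt
    push_neg at hlt
    have h1 : (t : Set ↥U) ⊆ s ∪ (t \ s) := by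
      intro x hx
      by_cases hxs : x ∈ s
      · exact Or.inl hxs
      · exact Or.inr ⟨hx, hxs⟩
    have h2 : #t ≤ #s + #(t \ s : Set ↥U) :=
      (Cardinal.mk_le_mk_of_subset h1).trans (Cardinal.mk_union_le _ _)
    have h3 : #s < κ := by rw [hmks, hY'rank]; exact hY
    have : #t < κ := h2.trans_lt (Cardinal.add_lt_of_lt hκ h3 hlt)
    rw [hmkt] at this
    exact absurd hU this.not_ge
  obtain ⟨u, hu_sub, hu_card⟩ := Cardinal.le_mk_iff_exists_subset.mp hdiff
  set t' : Set ↥U := s ∪ u with ht'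
  have ht'_sub : t' ⊆ t := Set.union_subset hst (hu_sub.trans Set.diff_subset)
  have ht'li : LinearIndependent K ((↑) : t' → ↥U) := LinearIndepOn.mono (v := id) htli ht'_sub
  have ht'card : #t' = κ := by
    apply le_antisymm
    · refine (Cardinal.mk_union_le _ _).trans ?_
      rw [hu_card]
      refine le_of_eq (Cardinal.add_eq_right hκ ?_)
      rw [hmks, hY'rank]; exact hY.le
    · rw [← hu_card]
      exact Cardinal.mk_le_mk_of_subset Set.subset_union_right
  set X' : Submodule K ↥U := Submodule.span K t' with hX'
  have hX'rank : Module.rank K X' = κ := by rw [rank_span_set ht'li, ht'card]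
  have hY'X' : Y' ≤ X' := by
    rw [← hsspan']
    exact Submodule.span_mono Set.subset_union_left
  refine ⟨X'.map U.subtype, ?_, Submodule.map_subtype_le U X', ?_⟩
  · have : Y = Y'.map U.subtype := by
      rw [hY', Submodule.map_comap_subtype, inf_eq_right.mpr hYU]
    rw [this]
    exact Submodule.map_mono hY'X'
  · rw [← hX'rank]
    exact ((Submodule.equivMapOfInjective U.subtype U.injective_subtype X').rank_eq).symm

end Aux

/-- **Theorem (extension version).** Let `K` be an infinite field, `V` a `K`-vector space,
and `κ` a cardinal with `#K < κ ≤ dim V`. If `𝓕 ⊆ V` is star-like and its additivity is at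
least `κ`, then every subspace `Y ⊆ 𝓕 ∪ {0}` of dimension `< κ` extends to a subspace
`X ⊆ 𝓕 ∪ {0}` of dimension exactly `κ`. -/
theorem extend_subspace_of_additivity {K V : Type u} [Field K] [Infinite K]
    [AddCommGroup V] [Module K V] (κ : Cardinal.{u})
    (hK : #K < κ) (hV : κ ≤ Module.rank K V) (𝓕 : Set V)
    (hstar : ∀ a : K, a ≠ 0 → ∀ f ∈ 𝓕, a • f ∈ 𝓕)
    (hadd : ∀ F : Set V, #F < κ → ∃ φ : V, (fun f => φ + f) '' F ⊆ 𝓕) :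
    ∀ Y : Submodule K V, (Y : Set V) ⊆ 𝓕 ∪ {0} → Module.rank K Y < κ →
      ∃ X : Submodule K V, Y ≤ X ∧ (X : Set V) ⊆ 𝓕 ∪ {0} ∧ Module.rank K X = κ := by
  intro Y hYF hYκ
  have hκ : ℵ₀ ≤ κ := (Cardinal.infinite_iff.mp ‹Infinite K›).trans hK.le
  by_contra hcon
  push_neg at hcon
  set P : Set (Submodule K V) :=
    {Z | Y ≤ Z ∧ (Z : Set V) ⊆ 𝓕 ∪ {0} ∧ Module.rank K Z < κ} with hP
  have hzorn : ∀ c ⊆ P, IsChain (· ≤ ·) c → ∃ ub ∈ P, ∀ z ∈ c, z ≤ ub := by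
    intro c hcP hchain
    rcases c.eq_empty_or_nonempty with rfl | hcne
    · exact ⟨Y, ⟨le_refl Y, hYF, hYκ⟩, fun z hz => absurd hz (Set.notMem_empty z)⟩
    · set U : Submodule K V := sSup c with hU
      have hmem : ∀ x : V, x ∈ U → ∃ Z ∈ c, x ∈ Z := fun x hx =>
        (Submodule.mem_sSup_of_directed hcne hchain.directedOn).mp hx
      have hUF : (U : Set V) ⊆ 𝓕 ∪ {0} := by
        intro x hx
        obtain ⟨Z, hZc, hxZ⟩ := hmem x hx
        exact (hcP hZc).2.1 hxZ
      have hYU : Y ≤ U := by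
        obtain ⟨Z, hZc⟩ := hcne
        exact (hcP hZc).1.trans (le_sSup hZc)
      have hUκ : Module.rank K U < κ := by
        by_contra hge
        push_neg at hge
        obtain ⟨X, hYX, hXU, hXκ⟩ := aux_shrink hκ Y U hYU hYκ hge
        exact hcon X hYX (fun x hx => hUF (hXU hx)) hXκ
      exact ⟨U, ⟨hYU, hUF, hUκ⟩, fun z hz => le_sSup hz⟩
  obtain ⟨M, hM⟩ := zorn_le₀ P hzorn
  obtain ⟨hYM, hMF, hMκ⟩ := hM.prop
  obtain ⟨w, hwM, hw𝓕, hwκ⟩ := aux_step hK hV 𝓕 hstar hadd M hMF hMκ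
  have hle : M ⊔ Submodule.span K {w} ≤ M :=
    hM.le_of_ge ⟨hYM.trans le_sup_left, hw𝓕, hwκ⟩ le_sup_left
  exact hwM (hle (le_sup_right (α := Submodule K V)
    (Submodule.mem_span_singleton_self w)))
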